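/- Let A and B be symmetric PSD d×d real matrices with A ⪰ B (i.e., A − B is PSD), and let k = rank(A). Then 2·tr(A−B)·λ_k(B) ≤ ‖A‖_F² − ‖B‖_F² ≤ 2·tr(A−B)·λ_1(A), where λ_k(B) denotes the k-th largest eigenvalue of B and λ_1(A) the largest eigenvalue of A. -/

import Mathlib

open Matrix

namespace FrobAux

variable {d : ℕ}

lemma diag_nonneg {M : Matrix (Fin d) (Fin d) ℝ} (hM : M.PosSemidef) (i : Fin d) : 0 ≤ M i i := by
  have := hM.dotProduct_mulVec_nonneg (Pi.single i 1)
  simpa [dotProduct, Matrix.mulVec, Pi.single_apply, Finset.sum_ite_eq, mul_ite,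
    ite_mul] using this

lemma trace_nonneg {M : Matrix (Fin d) (Fin d) ℝ} (hM : M.PosSemidef) : 0 ≤ M.trace :=
  Finset.sum_nonneg fun i _ => diag_nonneg hM i

lemma trace_mul_nonneg {M N : Matrix (Fin d) (Fin d) ℝ} (hM : M.PosSemidef)
    (hN : N.PosSemidef) : 0 ≤ (M * N).trace := by
  obtain ⟨S, rfl⟩ := (by open scoped MatrixOrder in exact CStarAlgebra.nonneg_iff_eq_star_mul_self.mp hM.nonneg :
    ∃ S : Matrix (Fin d) (Fin d) ℝ, M = star S * S)
  rw [Matrix.mul_assoc, Matrix.trace_mul_comm]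
  exact trace_nonneg (hN.mul_mul_conjTranspose_same S)

lemma trace_mul_diag (M : Matrix (Fin d) (Fin d) ℝ) (e : Fin d → ℝ) :
    (M * Matrix.diagonal e).trace = ∑ b, M b b * e b := by
  simp [Matrix.trace, Matrix.diag, Matrix.mul_diagonal]

/-- kernel monotonicity under Loewner order -/
lemma ker_le_ker {M N : Matrix (Fin d) (Fin d) ℝ} (hN : N.PosSemidef)
    (hMN : (M - N).PosSemidef) :
    LinearMap.ker M.mulVecLin ≤ LinearMap.ker N.mulVecLin := by
  intro x hx
  have hx' : M *ᵥ x = 0 := hx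
  have h1 : star x ⬝ᵥ (M - N) *ᵥ x = star x ⬝ᵥ M *ᵥ x - star x ⬝ᵥ N *ᵥ x := by
    rw [Matrix.sub_mulVec, dotProduct_sub]
  have h2 := hMN.dotProduct_mulVec_nonneg x
  rw [h1, hx'] at h2
  simp only [dotProduct_zero] at h2
  have h3 : star x ⬝ᵥ N *ᵥ x = 0 := le_antisymm (by linarith) (hN.dotProduct_mulVec_nonneg x)
  exact (hN.dotProduct_mulVec_zero_iff x).mp h3

lemma rank_add_ker (M : Matrix (Fin d) (Fin d) ℝ) :
    M.rank + Module.finrank ℝ (LinearMap.ker M.mulVecLin) = d := by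
  have := LinearMap.finrank_range_add_finrank_ker M.mulVecLin
  rw [Matrix.rank]
  simpa using this

end FrobAux

theorem frobenius_diff_trace_bound (d k : ℕ) (A B : Matrix (Fin d) (Fin d) ℝ)
    (hA : A.PosSemidef) (hB : B.PosSemidef) (hAB : (A - B).PosSemidef)
    (hk : A.rank = k)
    (μA μB : Fin d → ℝ) (hμA : Antitone μA) (hμB : Antitone μB)
    (hpA : ∃ σ : Equiv.Perm (Fin d), μA = hA.1.eigenvalues ∘ σ)
    (hpB : ∃ σ : Equiv.Perm (Fin d), μB = hB.1.eigenvalues ∘ σ) :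
    ∀ i j : Fin d, (i : ℕ) + 1 = k → (j : ℕ) = 0 →
      2 * (A - B).trace * μB i ≤ (∑ i', ∑ j', (A i' j') ^ 2) - (∑ i', ∑ j', (B i' j') ^ 2) ∧
      (∑ i', ∑ j', (A i' j') ^ 2) - (∑ i', ∑ j', (B i' j') ^ 2) ≤ 2 * (A - B).trace * μA j := by
  classical
  intro i j hik hj0
  obtain ⟨σA, hσA⟩ := hpA
  obtain ⟨σB, hσB⟩ := hpB
  set C := A - B with hCdef
  -- Frobenius identity
  have hsymA : ∀ a b, A b a = A a b := by
    intro a b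
    have := congrFun (congrFun hA.1 a) b
    simpa [Matrix.conjTranspose_apply] using this
  have hsymB : ∀ a b, B b a = B a b := by
    intro a b
    have := congrFun (congrFun hB.1 a) b
    simpa [Matrix.conjTranspose_apply] using this
  have hFA : (∑ i', ∑ j', (A i' j') ^ 2) = (A * A).trace := by
    simp only [Matrix.trace, Matrix.diag, Matrix.mul_apply]
    rw [Finset.sum_congr rfl]
    intro a _
    rw [Finset.sum_congr rfl]
    intro b _
    rw [hsymA a b, sq]
  have hFB : (∑ i', ∑ j', (B i' j') ^ 2) = (B * B).trace := by
    simp only [Matrix.trace, Matrix.diag, Matrix.mul_apply]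
    rw [Finset.sum_congr rfl]
    intro a _
    rw [Finset.sum_congr rfl]
    intro b _
    rw [hsymB a b, sq]
  have hid : (A * A).trace - (B * B).trace = (C * A).trace + (C * B).trace := by
    have h1 : C * A + B * C = A * A - B * B := by
      rw [hCdef]; noncomm_ring
    have h2 : ((A*A) - (B*B)).trace = (C * A).trace + (B * C).trace := by
      rw [← h1, Matrix.trace_add]
    rw [Matrix.trace_sub] at h2
    rw [h2, Matrix.trace_mul_comm B C]
  -- basic inequalities
  have hCC : 0 ≤ (C * C).trace := FrobAux.trace_mul_nonneg hAB hAB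
  have hCB_le_CA : (C * B).trace ≤ (C * A).trace := by
    have : (C * A).trace - (C * B).trace = (C * C).trace := by
      rw [← Matrix.trace_sub, ← Matrix.mul_sub, ← hCdef]
    linarith
  have hCBnn : 0 ≤ (C * B).trace := FrobAux.trace_mul_nonneg hAB hB
  have htrC : 0 ≤ C.trace := FrobAux.trace_nonneg hAB
  -- upper bound: (C * A).trace ≤ μA j * C.trace
  have hupper : (C * A).trace ≤ μA j * C.trace := by
    set U : Matrix (Fin d) (Fin d) ℝ := (hA.1.eigenvectorUnitary : Matrix (Fin d) (Fin d) ℝ) with hU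
    set e : Fin d → ℝ := hA.1.eigenvalues with he
    have hspec : A = U * Matrix.diagonal e * star U := by
      have := hA.1.spectral_theorem
      have hcoe : (RCLike.ofReal ∘ hA.1.eigenvalues : Fin d → ℝ) = e := by funext x; simp [he]
      rw [hcoe] at this
      exact this
    have hmax : ∀ b, e b ≤ μA j := by
      intro b
      have hj : j ≤ σA.symm b := by
        rw [Fin.le_def]; omega
      have := hμA hj
      rw [hσA] at this ⊢
      simpa using this
    have hNpsd : Matrix.PosSemidef (U * Matrix.diagonal (fun b => μA j - e b) * star U) := by
      rw [Matrix.star_eq_conjTranspose]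
      exact (Matrix.PosSemidef.diagonal (fun b => by simpa using hmax b)).mul_mul_conjTranspose_same U
    have hUU : U * star U = 1 := Matrix.mem_unitaryGroup_iff.mp hA.1.eigenvectorUnitary.2
    have hNeq : U * Matrix.diagonal (fun b => μA j - e b) * star U = μA j • 1 - A := by
      have h1 : Matrix.diagonal (fun b => μA j - e b)
          = μA j • (1 : Matrix (Fin d) (Fin d) ℝ) - Matrix.diagonal e := by
        rw [← Matrix.diagonal_one, ← Matrix.diagonal_smul, Matrix.diagonal_sub]
        funext b
        simp
      rw [h1, Matrix.mul_sub, Matrix.sub_mul, ← hspec]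
      rw [Matrix.mul_smul, Matrix.smul_mul, Matrix.mul_one, hUU]
    have h0 := FrobAux.trace_mul_nonneg hAB (hNeq ▸ hNpsd)
    have h2 : C * (μA j • 1 - A) = μA j • C - C * A := by
      rw [Matrix.mul_sub]
      congr 1
      rw [Matrix.mul_smul, Matrix.mul_one]
    rw [h2, Matrix.trace_sub, Matrix.trace_smul] at h0
    simp only [smul_eq_mul] at h0
    linarith
  -- lower bound: μB i * C.trace ≤ (C * B).trace
  have hlower : μB i * C.trace ≤ (C * B).trace := by
    set U : Matrix (Fin d) (Fin d) ℝ := (hB.1.eigenvectorUnitary : Matrix (Fin d) (Fin d) ℝ)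
      with hU
    set e : Fin d → ℝ := hB.1.eigenvalues with he
    have hspec : B = U * Matrix.diagonal e * star U := by
      have := hB.1.spectral_theorem
      have hcoe : (RCLike.ofReal ∘ hB.1.eigenvalues : Fin d → ℝ) = e := by funext x; simp [he]
      rw [hcoe] at this
      exact this
    have henn : ∀ b, 0 ≤ e b := fun b => hB.eigenvalues_nonneg b
    have hμBnn : ∀ x, 0 ≤ μB x := by intro x; rw [hσB]; exact henn _
    rcases eq_or_lt_of_le (hμBnn i) with hl0 | hlpos
    · rw [← hl0]; simpa using hCBnn
    -- rank of B equals number of nonzero entries of μB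
    have hcard : B.rank = (Finset.univ.filter (fun x : Fin d => μB x ≠ 0)).card := by
      rw [hB.1.rank_eq_card_non_zero_eigs]
      rw [← Fintype.card_subtype]
      exact Fintype.card_congr (σB.subtypeEquiv (fun x => by rw [hσB]; simp [he])).symm
    have hIic : ∀ x : Fin d, μB x ≠ 0 → (x : ℕ) + 1 ≤ B.rank := by
      intro x hx
      rw [hcard]
      have hsub : Finset.Iic x ⊆ Finset.univ.filter (fun y => μB y ≠ 0) := by
        intro y hy
        simp only [Finset.mem_filter, Finset.mem_univ, true_and]
        have h1 : μB x ≤ μB y := hμB (Finset.mem_Iic.mp hy)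
        have h2 : 0 < μB x := lt_of_le_of_ne (hμBnn x) (Ne.symm hx)
        exact ne_of_gt (lt_of_lt_of_le h2 h1)
      have := Finset.card_le_card hsub
      simpa [Fin.card_Iic] using this
    -- rank comparisons
    have hkerAB := FrobAux.ker_le_ker hB hAB
    have h1 := FrobAux.rank_add_ker A
    have h2 := FrobAux.rank_add_ker B
    have hkle : Module.finrank ℝ (LinearMap.ker A.mulVecLin)
        ≤ Module.finrank ℝ (LinearMap.ker B.mulVecLin) := Submodule.finrank_mono hkerAB
    have hrBk : B.rank = k := by
      have := hIic i (ne_of_gt hlpos)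
      omega
    have hkerEq : LinearMap.ker A.mulVecLin = LinearMap.ker B.mulVecLin := by
      apply Submodule.eq_of_le_of_finrank_le hkerAB
      omega
    -- nonzero eigenvalues of B are at least μB i
    have hbig : ∀ b, e b ≠ 0 → μB i ≤ e b := by
      intro b hb
      have h3 := hIic (σB.symm b) (by rw [hσB]; simpa using hb)
      have h4 : σB.symm b ≤ i := by rw [Fin.le_def]; omega
      have h5 := hμB h4
      have h6 : μB (σB.symm b) = e b := by rw [hσB]; simp
      exact h6 ▸ h5
    set M := star U * C * U with hM
    have hMpsd : M.PosSemidef := by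
      rw [hM, Matrix.star_eq_conjTranspose]
      exact hAB.conjTranspose_mul_mul_same U
    have hUU : U * star U = 1 := Matrix.mem_unitaryGroup_iff.mp hB.1.eigenvectorUnitary.2
    have htrM : M.trace = C.trace := by
      rw [hM, Matrix.trace_mul_cycle, hUU, Matrix.one_mul]
    have htrCB : (C * B).trace = (M * Matrix.diagonal e).trace := by
      rw [hspec, hM]
      rw [show C * (U * Matrix.diagonal e * star U)
          = (C * U * Matrix.diagonal e) * star U by simp only [Matrix.mul_assoc]]
      rw [Matrix.trace_mul_comm]
      simp only [Matrix.mul_assoc]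
    have hMz : ∀ b, e b = 0 → M b b = 0 := by
      intro b hb
      have hu : (fun x => U x b) = ⇑(hB.1.eigenvectorBasis b) := by
        funext x; simp [hU]
      have hBu : B *ᵥ (fun x => U x b) = 0 := by
        rw [hu, hB.1.mulVec_eigenvectorBasis]
        rw [show hB.1.eigenvalues b = e b from rfl, hb, zero_smul]
      have hmem : (fun x => U x b) ∈ LinearMap.ker B.mulVecLin := by
        simpa [Matrix.mulVecLin_apply] using hBu
      have hAu : A *ᵥ (fun x => U x b) = 0 := by
        have := hkerEq ▸ hmem
        simpa [Matrix.mulVecLin_apply] using this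
      have hCu : C *ᵥ (fun x => U x b) = 0 := by
        rw [hCdef, Matrix.sub_mulVec, hAu, hBu, sub_zero]
      have hCU : ∀ x, (C * U) x b = 0 := by
        intro x
        have := congrFun hCu x
        simpa [Matrix.mulVec, Matrix.mul_apply, dotProduct] using this
      rw [hM, Matrix.mul_assoc]
      simp [Matrix.mul_apply, hCU]
    rw [htrCB, ← htrM, FrobAux.trace_mul_diag, Matrix.trace]
    unfold Matrix.diag
    rw [Finset.mul_sum]
    apply Finset.sum_le_sum
    intro b _
    by_cases hb : e b = 0
    · rw [hMz b hb, hb]; simp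
    · rw [mul_comm (μB i) (M b b)]
      exact mul_le_mul_of_nonneg_left (hbig b hb) (FrobAux.diag_nonneg hMpsd b)
  constructor
  · rw [hFA, hFB, hid]; linarith
  · rw [hFA, hFB, hid]; linarith
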